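/- arXiv:hep-th/9303148 — 2 statements merged into one kernel-verified Lean document; each statement's English description precedes it below -/
import Mathlib

section
/- The assignment ρ(u^i_j) defined by ρ₂(u₁) = Q₁₂ where Q = R₂₁R₁₂ extends to an algebra representation of the braided matrix algebra B(R): i.e., the matrices Q satisfy the defining relations R₂₁ Q₁₃ R₁₂ Q₂₃ = Q₂₃ R₂₁ Q₁₃ R₁₂ of B(R) in matrix form. -/
open Matrix

variable {k : Type*} [Field k] {n : ℕ}

/-- Pairs of indices, labelling a basis of `V ⊗ V` (or multi-indices `I = (i₀, i₁)`). -/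
abbrev I2 (n : ℕ) := Fin n × Fin n

/-- Triples of indices, labelling a basis of `V ⊗ V ⊗ V`. -/
abbrev I3 (n : ℕ) := Fin n × Fin n × Fin n

/-- `A₁₂ = A ⊗ id`, the lift of an operator on `V ⊗ V` to the first two factors of
`V ⊗ V ⊗ V`. -/
def amp12 (A : Matrix (I2 n) (I2 n) k) : Matrix (I3 n) (I3 n) k :=
  Matrix.of fun p q => A (p.1, p.2.1) (q.1, q.2.1) * (if p.2.2 = q.2.2 then 1 else 0)

/-- `A₁₃`, acting on the first and third factors of `V ⊗ V ⊗ V`. -/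
def amp13 (A : Matrix (I2 n) (I2 n) k) : Matrix (I3 n) (I3 n) k :=
  Matrix.of fun p q => A (p.1, p.2.2) (q.1, q.2.2) * (if p.2.1 = q.2.1 then 1 else 0)

/-- `A₂₃`, acting on the last two factors of `V ⊗ V ⊗ V`. -/
def amp23 (A : Matrix (I2 n) (I2 n) k) : Matrix (I3 n) (I3 n) k :=
  Matrix.of fun p q => A (p.2.1, p.2.2) (q.2.1, q.2.2) * (if p.1 = q.1 then 1 else 0)

/-- `A₂₁ = τ ∘ A ∘ τ`, conjugation by the flip of the two tensor factors. -/
def flipM (A : Matrix (I2 n) (I2 n) k) : Matrix (I2 n) (I2 n) k :=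
  Matrix.of fun p q => A (p.2, p.1) (q.2, q.1)

/-- The quantum Yang–Baxter equation `R₁₂R₁₃R₂₃ = R₂₃R₁₃R₁₂`. -/
def QYBE (R : Matrix (I2 n) (I2 n) k) : Prop :=
  amp12 R * amp13 R * amp23 R = amp23 R * amp13 R * amp12 R

/-- `Rtil` is the second inverse `R̃ = ((R^{t₂})⁻¹)^{t₂}` of `R`, characterized by
`R̃ⁱₐᵇₗ Rᵃⱼᵏᵦ = δⁱⱼ δᵏₗ = Rⁱₐᵇₗ R̃ᵃⱼᵏᵦ` (sum over `a`, `b`).  Here the entry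
`R ((i,k),(j,l))` denotes `Rⁱⱼᵏₗ`. -/
def IsSecondInverse (R Rtil : Matrix (I2 n) (I2 n) k) : Prop :=
  (∀ i j kk l : Fin n, ∑ a, ∑ b, Rtil (i, b) (a, l) * R (a, kk) (j, b)
      = (if i = j then (1 : k) else 0) * (if kk = l then 1 else 0)) ∧
  (∀ i j kk l : Fin n, ∑ a, ∑ b, R (i, b) (a, l) * Rtil (a, kk) (j, b)
      = (if i = j then (1 : k) else 0) * (if kk = l then 1 else 0))

/-- The structure constants
`c^{IJ}_K = R̃ᵃ_{i₁}{}^{j₀}_b R⁻¹{}ᵇ_{k₀}{}^{i₀}_c R^{k₁}_n{}ᶜ_m Rᵐₐ{}ⁿ_{j₁}`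
of the matrix braided-Lie algebra associated to a bi-invertible R-matrix
(repeated indices summed). -/
def braidedC (R Rinv Rtil : Matrix (I2 n) (I2 n) k) (I J K : I2 n) : k :=
  ∑ a, ∑ b, ∑ c, ∑ m, ∑ nn,
    Rtil (a, J.1) (I.2, b) * Rinv (b, I.1) (K.1, c) *
      R (K.2, c) (nn, m) * R (m, nn) (a, J.2)

section Aux
variable (A B : Matrix (I2 n) (I2 n) k)

lemma amp12_mul : (amp12 (A * B) : Matrix (I3 n) (I3 n) k) = amp12 A * amp12 B := by
  ext p q
  simp only [amp12, Matrix.mul_apply, Matrix.of_apply, Fintype.sum_prod_type]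
  simp [mul_ite, ite_mul, Finset.mul_sum, Finset.sum_mul, Finset.sum_ite_eq, Finset.sum_ite_eq']

lemma amp13_mul : (amp13 (A * B) : Matrix (I3 n) (I3 n) k) = amp13 A * amp13 B := by
  ext p q
  simp only [amp13, Matrix.mul_apply, Matrix.of_apply, Fintype.sum_prod_type]
  simp [mul_ite, ite_mul, Finset.mul_sum, Finset.sum_mul, Finset.sum_ite_eq, Finset.sum_ite_eq']

lemma amp23_mul : (amp23 (A * B) : Matrix (I3 n) (I3 n) k) = amp23 A * amp23 B := by
  ext p q
  simp only [amp23, Matrix.mul_apply, Matrix.of_apply, Fintype.sum_prod_type]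
  simp [mul_ite, ite_mul, Finset.mul_sum, Finset.sum_mul, Finset.sum_ite_eq, Finset.sum_ite_eq']

end Aux
section Perm
variable (A : Matrix (I2 n) (I2 n) k)

/-- swap legs 2,3 -/
def e23 : I3 n ≃ I3 n where
  toFun p := (p.1, p.2.2, p.2.1)
  invFun p := (p.1, p.2.2, p.2.1)
  left_inv p := rfl
  right_inv p := rfl

/-- swap legs 1,3 -/
def e13 : I3 n ≃ I3 n where
  toFun p := (p.2.2, p.2.1, p.1)
  invFun p := (p.2.2, p.2.1, p.1)
  left_inv p := rfl
  right_inv p := rfl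

/-- the cycle sending p to (p₂,p₃,p₁) -/
def ecyc : I3 n ≃ I3 n where
  toFun p := (p.2.1, p.2.2, p.1)
  invFun p := (p.2.2, p.1, p.2.1)
  left_inv p := rfl
  right_inv p := rfl

lemma sub_e23_12 : (amp12 A).submatrix (e23 (n := n)) e23 = amp13 A := by
  ext p q; simp [amp12, amp13, e23, Matrix.submatrix_apply]
lemma sub_e23_13 : (amp13 A).submatrix (e23 (n := n)) e23 = amp12 A := by
  ext p q; simp [amp12, amp13, e23, Matrix.submatrix_apply]
lemma sub_e23_23 : (amp23 A).submatrix (e23 (n := n)) e23 = amp23 (flipM A) := by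
  ext p q; simp [amp23, flipM, e23, Matrix.submatrix_apply]
lemma sub_e13_12 : (amp12 A).submatrix (e13 (n := n)) e13 = amp23 (flipM A) := by
  ext p q; simp [amp12, amp23, flipM, e13, Matrix.submatrix_apply]
lemma sub_e13_13 : (amp13 A).submatrix (e13 (n := n)) e13 = amp13 (flipM A) := by
  ext p q; simp [amp13, flipM, e13, Matrix.submatrix_apply]
lemma sub_e13_23 : (amp23 A).submatrix (e13 (n := n)) e13 = amp12 (flipM A) := by
  ext p q; simp [amp23, amp12, flipM, e13, Matrix.submatrix_apply]
lemma sub_ecyc_12 : (amp12 A).submatrix (ecyc (n := n)) ecyc = amp23 A := by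
  ext p q; simp [amp12, amp23, ecyc, Matrix.submatrix_apply]
lemma sub_ecyc_13 : (amp13 A).submatrix (ecyc (n := n)) ecyc = amp12 (flipM A) := by
  ext p q; simp [amp13, amp12, flipM, ecyc, Matrix.submatrix_apply]
lemma sub_ecyc_23 : (amp23 A).submatrix (ecyc (n := n)) ecyc = amp13 (flipM A) := by
  ext p q; simp [amp23, amp13, flipM, ecyc, Matrix.submatrix_apply]

end Perm

section YBvariants
variable {R : Matrix (I2 n) (I2 n) k} (h : QYBE R)
include h

lemma Y23 : amp13 R * amp12 R * amp23 (flipM R)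
    = amp23 (flipM R) * amp12 R * amp13 R := by
  have := congrArg (fun M => M.submatrix (e23 (n := n)) e23) h
  simpa only [← Matrix.submatrix_mul_equiv _ _ _ (e23 (n := n)) _,
    sub_e23_12, sub_e23_13, sub_e23_23] using this

lemma Y13 : amp23 (flipM R) * amp13 (flipM R) * amp12 (flipM R)
    = amp12 (flipM R) * amp13 (flipM R) * amp23 (flipM R) := by
  have := congrArg (fun M => M.submatrix (e13 (n := n)) e13) h
  simpa only [← Matrix.submatrix_mul_equiv _ _ _ (e13 (n := n)) _,
    sub_e13_12, sub_e13_13, sub_e13_23] using this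

lemma Ycyc : amp23 R * amp12 (flipM R) * amp13 (flipM R)
    = amp13 (flipM R) * amp12 (flipM R) * amp23 R := by
  have := congrArg (fun M => M.submatrix (ecyc (n := n)) ecyc) h
  simpa only [← Matrix.submatrix_mul_equiv _ _ _ (ecyc (n := n)) _,
    sub_ecyc_12, sub_ecyc_13, sub_ecyc_23] using this

end YBvariants
lemma pad_mul {M : Type*} [Monoid M] {a b c d e f : M} (h : a * b * c = d * e * f)
    (x : M) : a * (b * (c * x)) = d * (e * (f * x)) := by
  rw [← mul_assoc, ← mul_assoc, h, mul_assoc, mul_assoc]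

/-- The braided-matrix relation `R₂₁Q₁₃R₁₂Q₂₃ = Q₂₃R₂₁Q₁₃R₁₂` for `Q = R₂₁R₁₂`. -/
lemma big_identity {R : Matrix (I2 n) (I2 n) k} (h : QYBE R) :
    amp12 (flipM R) * (amp13 (flipM R * R) * (amp12 R * amp23 (flipM R * R)))
      = amp23 (flipM R * R) * (amp12 (flipM R) * (amp13 (flipM R * R) * amp12 R)) := by
  set S := amp12 R
  set T := amp13 R
  set U := amp23 R
  set S' := amp12 (flipM R)
  set T' := amp13 (flipM R)
  set U' := amp23 (flipM R)
  rw [amp13_mul, amp23_mul]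
  -- goal : S' * (T' * T * (S * (U' * U))) = U' * U * (S' * (T' * T * S))
  have h23 := Y23 h
  have h13 := Y13 h
  have hcyc := Ycyc h
  calc S' * (T' * T * (S * (U' * U)))
      = S' * (T' * (T * (S * (U' * U)))) := by simp only [mul_assoc]
    _ = S' * (T' * (U' * (S * (T * U)))) := by rw [pad_mul h23]
    _ = S' * (T' * (U' * (S * (T * U)))) := rfl
    _ = U' * (T' * (S' * (S * (T * U)))) := pad_mul h13.symm _
    _ = U' * (T' * (S' * (U * (T * S)))) := by
          rw [show S * (T * U) = U * (T * S) by
            rw [← mul_assoc, h, mul_assoc]]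
    _ = U' * (U * (S' * (T' * (T * S)))) := by
          rw [pad_mul hcyc.symm]
    _ = U' * U * (S' * (T' * T * S)) := by simp only [mul_assoc]
lemma entry_L (R Q : Matrix (I2 n) (I2 n) k) (K i j L x y : Fin n) :
    (amp12 (flipM R) * (amp13 Q * (amp12 R * amp23 Q))) (i, (K, x)) (j, (L, y))
      = ∑ a, ∑ b, ∑ c, ∑ d, (R (K, i) (a, b) * R (c, a) (j, d)) *
          ∑ z, Q (b, x) (c, z) * Q (d, z) (L, y) := by
  simp only [Matrix.mul_apply, amp12, amp13, amp23, flipM, Matrix.of_apply,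
    Fintype.sum_prod_type, mul_ite, ite_mul, mul_one, mul_zero, one_mul, zero_mul,
    Finset.sum_ite_irrel, Finset.sum_const_zero,
    Finset.sum_ite_eq, Finset.sum_ite_eq', Finset.mem_univ, if_true,
    Finset.mul_sum, Finset.sum_mul]
  -- LHS: ∑ b ∑ a ∑ c ∑ z ∑ d, R (K,i) (a,b) * (Q (b,x) (c,z) * (R (c,a) (j,d) * Q (d,z) (L,y)))
  -- RHS: ∑ a ∑ b ∑ c ∑ d ∑ z, ...
  rw [Finset.sum_comm]
  refine Finset.sum_congr rfl fun a _ => Finset.sum_congr rfl fun b _ =>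
    Finset.sum_congr rfl fun c _ => ?_
  rw [Finset.sum_comm]
  exact Finset.sum_congr rfl fun d _ => Finset.sum_congr rfl fun z _ => by ring

lemma sum_reorder (f : Fin n → Fin n → Fin n → Fin n → k) :
    ∑ z, ∑ c, ∑ b, ∑ d, f z c b d = ∑ b, ∑ c, ∑ d, ∑ z, f z c b d :=
  calc ∑ z, ∑ c, ∑ b, ∑ d, f z c b d
      = ∑ c, ∑ z, ∑ b, ∑ d, f z c b d := Finset.sum_comm
    _ = ∑ c, ∑ b, ∑ z, ∑ d, f z c b d :=
        Finset.sum_congr rfl fun c _ => Finset.sum_comm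
    _ = ∑ b, ∑ c, ∑ z, ∑ d, f z c b d := Finset.sum_comm
    _ = ∑ b, ∑ c, ∑ d, ∑ z, f z c b d :=
        Finset.sum_congr rfl fun b _ => Finset.sum_congr rfl fun c _ =>
          Finset.sum_comm

lemma entry_R (R Q : Matrix (I2 n) (I2 n) k) (K i j L x y : Fin n) :
    (amp23 Q * (amp12 (flipM R) * (amp13 Q * amp12 R))) (i, (K, x)) (j, (L, y))
      = ∑ a, ∑ b, ∑ c, ∑ d, (R (a, i) (b, c) * R (d, b) (j, L)) *
          ∑ z, Q (K, x) (a, z) * Q (c, z) (d, y) := by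
  simp only [Matrix.mul_apply, amp12, amp13, amp23, flipM, Matrix.of_apply,
    Fintype.sum_prod_type, mul_ite, ite_mul, mul_one, mul_zero, one_mul, zero_mul,
    Finset.sum_ite_irrel, Finset.sum_const_zero,
    Finset.sum_ite_eq, Finset.sum_ite_eq', Finset.mem_univ, if_true,
    Finset.mul_sum, Finset.sum_mul]
  -- LHS: ∑ a ∑ z ∑ c ∑ b ∑ d, Q (K,x) (a,z) * (R (a,i) (b,c) * (Q (c,z) (d,y) * R (d,b) (j,L)))
  -- RHS: ∑ a ∑ b ∑ c ∑ d ∑ z, ...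
  refine Finset.sum_congr rfl fun a _ => ?_
  -- LHS (z,c,b,d)  vs RHS (b,c,d,z)
  rw [sum_reorder]
  exact Finset.sum_congr rfl fun b _ => Finset.sum_congr rfl fun c _ =>
    Finset.sum_congr rfl fun d _ => Finset.sum_congr rfl fun z _ => by ring

/-- The representation `ρ` of the braided matrices `B(R)` on `kⁿ` determined on generators by
`ρ₂(u₁) = Q₁₂`, `Q = R₂₁R₁₂`: the matrices `ρ(uⁱⱼ)ᵃᵦ = Q ((i,a),(j,b))` satisfy the defining
relations `R^k_a{}^i_b u^b_c R^c_j{}^a_d u^d_l = u^k_a R^a_b{}^i_c u^c_d R^d_j{}^b_l` of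
`B(R)`. -/
theorem braided_matrix_representation (R : Matrix (I2 n) (I2 n) k)
    (hinv : IsUnit R) (hYB : QYBE R) :
    ∀ K i j L : Fin n,
      (∑ a, ∑ b, ∑ c, ∑ d, (R (K, i) (a, b) * R (c, a) (j, d)) •
          ((Matrix.of fun x y => (flipM R * R) (b, x) (c, y)) *
            (Matrix.of fun x y => (flipM R * R) (d, x) (L, y))))
        = ∑ a, ∑ b, ∑ c, ∑ d, (R (a, i) (b, c) * R (d, b) (j, L)) •
          ((Matrix.of fun x y => (flipM R * R) (K, x) (a, y)) *
            (Matrix.of fun x y => (flipM R * R) (c, x) (d, y))) := by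
  intro K i j L
  have key := big_identity hYB
  set Q := flipM R * R with hQ
  ext x y
  simp only [Matrix.sum_apply, Matrix.smul_apply, Matrix.mul_apply, Matrix.of_apply,
    smul_eq_mul]
  rw [← entry_L R Q K i j L x y, ← entry_R R Q K i j L x y, key]
end

section
/- For the standard GL_q(2) R-matrix with generic q, the braided dimension dim(𝓛) = R̃^K_J{}^J_K (braided trace of the identity built from the induced multi-index R-matrix) equals [4]_q = (1−q⁻⁸)/(1−q⁻²). -/
open Matrix

variable {k : Type*} [Field k] {n : ℕ}

/-- The standard `GL_q(2)` R-matrix `((q,0,0,0),(0,1,q−q⁻¹,0),(0,0,1,0),(0,0,0,q))`,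
with rows labelled `(i,k)` and columns `(j,l)` in the order `(1,1),(1,2),(2,1),(2,2)`. -/
def Rgl2 (k : Type*) [Field k] (q : k) : Matrix (I2 2) (I2 2) k :=
  Matrix.of fun p r =>
    if p = r then (if p = ((0 : Fin 2), (0 : Fin 2)) ∨ p = (1, 1) then q else 1)
    else if p = ((0 : Fin 2), (1 : Fin 2)) ∧ r = (1, 0) then q - q⁻¹ else 0

/-- The `gl_{1|1}` (Alexander–Conway) R-matrix
`((q,0,0,0),(0,1,q−q⁻¹,0),(0,0,1,0),(0,0,0,−q⁻¹))`. -/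
def Rgl11 (k : Type*) [Field k] (q : k) : Matrix (I2 2) (I2 2) k :=
  Matrix.of fun p r =>
    if p = r then
      (if p = ((0 : Fin 2), (0 : Fin 2)) then q else if p = (1, 1) then -q⁻¹ else 1)
    else if p = ((0 : Fin 2), (1 : Fin 2)) ∧ r = (1, 0) then q - q⁻¹ else 0

/-- The braided-Lie bracket extended bilinearly to coefficient vectors with respect to the
basis `u^I`: `Br(x, y)_K = Σ_{I,J} x_I y_J c^{IJ}_K`. -/
def Br {k : Type*} [Field k] (R Rinv Rtil : Matrix (I2 2) (I2 2) k)
    (x y : I2 2 → k) : I2 2 → k :=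
  fun K => ∑ I, ∑ J, x I * y J * braidedC R Rinv Rtil I J K

/-- Coefficient vector of the generator `a = u¹₁`. -/
def va (k : Type*) [Field k] : I2 2 → k := fun K => if K = (0, 0) then 1 else 0

/-- Coefficient vector of the generator `b = u¹₂`. -/
def vb (k : Type*) [Field k] : I2 2 → k := fun K => if K = (0, 1) then 1 else 0

/-- Coefficient vector of the generator `c = u²₁`. -/
def vc (k : Type*) [Field k] : I2 2 → k := fun K => if K = (1, 0) then 1 else 0

/-- Coefficient vector of the generator `d = u²₂`. -/
def vd (k : Type*) [Field k] : I2 2 → k := fun K => if K = (1, 1) then 1 else 0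

/-- The induced multi-index braiding matrix
`𝐑^K_L{}^I_J = R^{i₀}_a{}^d_{l₀} R⁻¹{}^a_{j₀}{}^{l₁}_b R^{j₁}_c{}^b_{k₁} R̃^c_{i₁}{}^{k₀}_d`
(repeated indices summed), with rows `(K, I)` and columns `(L, J)`. -/
def bigR (R Rinv Rtil : Matrix (I2 n) (I2 n) k) :
    Matrix (I2 n × I2 n) (I2 n × I2 n) k :=
  Matrix.of fun P Q =>
    ∑ a, ∑ b, ∑ c, ∑ d,
      R (P.2.1, d) (a, Q.1.1) * Rinv (a, Q.1.2) (Q.2.1, b) *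
        R (Q.2.2, b) (c, P.1.2) * Rtil (c, P.1.1) (P.2.2, d)

/-- `Btil` is the second inverse of the multi-index matrix `B`. -/
def IsBigSecondInverse (B Btil : Matrix (I2 n × I2 n) (I2 n × I2 n) k) : Prop :=
  (∀ I J K L : I2 n, ∑ A, ∑ Bb, Btil (I, Bb) (A, L) * B (A, K) (J, Bb)
      = (if I = J then (1 : k) else 0) * (if K = L then 1 else 0)) ∧
  (∀ I J K L : I2 n, ∑ A, ∑ Bb, B (I, Bb) (A, L) * Btil (A, K) (J, Bb)
      = (if I = J then (1 : k) else 0) * (if K = L then 1 else 0))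

/-- The braided dimension `dim(𝓛) = 𝐑̃^K_J{}^J_K` (sum over `J`, `K`). -/
def braidedDim (Btil : Matrix (I2 n × I2 n) (I2 n × I2 n) k) : k :=
  ∑ J, ∑ K, Btil (K, J) (J, K)

/-- The braided Killing form `g^{IJ} = c^{IA}_B c^{JL}_A 𝐑̃^K_L{}^B_K`. -/
def killingG (R Rinv Rtil : Matrix (I2 n) (I2 n) k)
    (Btil : Matrix (I2 n × I2 n) (I2 n × I2 n) k) (I J : I2 n) : k :=
  ∑ A, ∑ B, ∑ L, ∑ K,
    braidedC R Rinv Rtil I A B * braidedC R Rinv Rtil J L A * Btil (K, B) (L, K)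

/-- The braided trace `T^I = c^{IJ}_A 𝐑̃^K_J{}^A_K`. -/
def braidedT (R Rinv Rtil : Matrix (I2 n) (I2 n) k)
    (Btil : Matrix (I2 n × I2 n) (I2 n × I2 n) k) (I : I2 n) : k :=
  ∑ J, ∑ A, ∑ K, braidedC R Rinv Rtil I J A * Btil (K, A) (J, K)

/-- `δ^I = δ^{i₀}_{i₁}`. -/
def deltaI (k : Type*) [Field k] {n : ℕ} (I : I2 n) : k := if I.1 = I.2 then 1 else 0
/-! ### Auxiliary machinery for the proof -/

/-- Explicit inverse of the `GL_q(2)` R-matrix. -/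
def RinvE (k : Type*) [Field k] (q : k) : Matrix (I2 2) (I2 2) k :=
  Matrix.of fun p r =>
    if p = r then (if p = ((0 : Fin 2), (0 : Fin 2)) ∨ p = (1, 1) then q⁻¹ else 1)
    else if p = ((0 : Fin 2), (1 : Fin 2)) ∧ r = (1, 0) then q⁻¹ - q else 0

/-- Explicit second inverse of the `GL_q(2)` R-matrix. -/
def RtilE (k : Type*) [Field k] (q : k) : Matrix (I2 2) (I2 2) k :=
  Matrix.of fun p r =>
    if p = r then (if p = ((0 : Fin 2), (0 : Fin 2)) ∨ p = (1, 1) then q⁻¹ else 1)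
    else if p = ((0 : Fin 2), (1 : Fin 2)) ∧ r = (1, 0) then q⁻¹ * q⁻¹ * q⁻¹ - q⁻¹ else 0

/-- The partial transpose / index reshuffle turning "second inverse" into matrix inverse. -/
def ptM {k : Type*} [Field k] {α : Type*} (A : Matrix (α × α) (α × α) k) :
    Matrix (α × α) (α × α) k :=
  Matrix.of fun p r => A (p.1, r.2) (r.1, p.2)

lemma ptM_ptM {k : Type*} [Field k] {α : Type*} (A : Matrix (α × α) (α × α) k) :
    ptM (ptM A) = A := by
  ext p r; simp [ptM]

lemma ptM_mul_apply {k : Type*} [Field k] {α : Type*} [Fintype α]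
    (A B : Matrix (α × α) (α × α) k) (p r : α × α) :
    (ptM A * ptM B) p r = ∑ a, ∑ b, A (p.1, b) (a, p.2) * B (a, r.2) (r.1, b) := by
  simp [ptM, Matrix.mul_apply, Fintype.sum_prod_type]

/-- The witness row vector for the braided dimension computation. -/
def wV (k : Type*) [Field k] (q : k) : I2 2 × I2 2 → k := fun P =>
  if P = (((0 : Fin 2), (0 : Fin 2)), ((0 : Fin 2), (0 : Fin 2))) then q⁻¹ ^ 2
  else if P = (((0 : Fin 2), (0 : Fin 2)), (1, 1)) then q⁻¹ ^ 2 - q⁻¹ ^ 4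
  else if P = (((0 : Fin 2), (1 : Fin 2)), (0, 1)) then q⁻¹ ^ 6
  else if P = (((1 : Fin 2), (0 : Fin 2)), (1, 0)) then q⁻¹ ^ 2
  else if P = (((1 : Fin 2), (1 : Fin 2)), (0, 0)) then 1 - q⁻¹ ^ 2
  else if P = (((1 : Fin 2), (1 : Fin 2)), (1, 1)) then q⁻¹ ^ 4 - q⁻¹ ^ 2 + 1
  else 0

/-- The "identity" vector `u_P = δ_{P₁ P₂}`. -/
def uV (k : Type*) [Field k] : I2 2 × I2 2 → k := fun P => if P.1 = P.2 then 1 else 0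
lemma sum_uV_left {k : Type*} [Field k] (f : I2 2 × I2 2 → k) :
    ∑ P, uV k P * f P = ∑ K : I2 2, f (K, K) := by
  rw [Fintype.sum_prod_type]
  simp [uV, ite_mul, Finset.sum_ite_eq]

lemma sum_uV_right {k : Type*} [Field k] (f : I2 2 × I2 2 → k) :
    ∑ P, f P * uV k P = ∑ K : I2 2, f (K, K) := by
  rw [Fintype.sum_prod_type]
  simp [uV, mul_ite, Finset.sum_ite_eq]

lemma Rgl2_mul_RinvE {k : Type*} [Field k] (q : k) (hq0 : q ≠ 0) :
    Rgl2 k q * RinvE k q = 1 := by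
  ext ⟨i, j⟩ ⟨a, b⟩
  fin_cases i <;> fin_cases j <;> fin_cases a <;> fin_cases b <;>
    simp [Rgl2, RinvE, Matrix.mul_apply, Matrix.one_apply, Fintype.sum_prod_type,
      Fin.sum_univ_two, Prod.ext_iff] <;>
    field_simp <;> ring

lemma ptR_mul_ptRtilE {k : Type*} [Field k] (q : k) (hq0 : q ≠ 0) :
    ptM (Rgl2 k q) * ptM (RtilE k q) = 1 := by
  ext ⟨i, j⟩ ⟨a, b⟩
  fin_cases i <;> fin_cases j <;> fin_cases a <;> fin_cases b <;>
    simp [Rgl2, RtilE, ptM, Matrix.mul_apply, Matrix.one_apply, Fintype.sum_prod_type,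
      Fin.sum_univ_two, Prod.ext_iff] <;>
    field_simp <;> ring

lemma ptRtilE_mul_ptR {k : Type*} [Field k] (q : k) (hq0 : q ≠ 0) :
    ptM (RtilE k q) * ptM (Rgl2 k q) = 1 := by
  ext ⟨i, j⟩ ⟨a, b⟩
  fin_cases i <;> fin_cases j <;> fin_cases a <;> fin_cases b <;>
    simp [Rgl2, RtilE, ptM, Matrix.mul_apply, Matrix.one_apply, Fintype.sum_prod_type,
      Fin.sum_univ_two, Prod.ext_iff] <;>
    field_simp <;> ring
set_option maxHeartbeats 2000000 in
lemma key_w {k : Type*} [Field k] (q : k) (hq0 : q ≠ 0) (Q : I2 2 × I2 2) :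
    ∑ P : I2 2 × I2 2,
      wV k q P * bigR (Rgl2 k q) (RinvE k q) (RtilE k q) (P.1, Q.2) (Q.1, P.2) = uV k Q := by
  obtain ⟨⟨a, b⟩, ⟨c, d⟩⟩ := Q
  fin_cases a <;> fin_cases b <;> fin_cases c <;> fin_cases d <;>
    (simp [wV, uV, bigR, Rgl2, RinvE, RtilE, Fintype.sum_prod_type, Fin.sum_univ_two,
      Prod.ext_iff]; try field_simp; try ring_nf; try field_simp; try ring)

/-- For the standard `GL_q(2)` R-matrix with generic `q`, the braided dimension
`dim(𝓛) = 𝐑̃^K_J{}^J_K` equals `[4]_q = (1−q⁻⁸)/(1−q⁻²)`. -/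
theorem gl2_braided_dimension (q : k) (hq0 : q ≠ 0)
    (hgen : ∀ m : ℕ, 0 < m → (q ^ 2) ^ m ≠ 1)
    (Rinv Rtil : Matrix (I2 2) (I2 2) k)
    (h1 : Rgl2 k q * Rinv = 1) (h2 : Rinv * Rgl2 k q = 1)
    (ht : IsSecondInverse (Rgl2 k q) Rtil)
    (Btil : Matrix (I2 2 × I2 2) (I2 2 × I2 2) k)
    (hB : IsBigSecondInverse (bigR (Rgl2 k q) Rinv Rtil) Btil) :
    braidedDim Btil = (1 - (q⁻¹) ^ 8) / (1 - (q⁻¹) ^ 2) := by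
  have hRinv : Rinv = RinvE k q := by
    calc Rinv = Rinv * (Rgl2 k q * RinvE k q) := by rw [Rgl2_mul_RinvE q hq0, mul_one]
      _ = (Rinv * Rgl2 k q) * RinvE k q := by rw [mul_assoc]
      _ = RinvE k q := by rw [h2, one_mul]
  have ht1 : ptM Rtil * ptM (Rgl2 k q) = 1 := by
    ext p r
    rw [ptM_mul_apply, ht.1 p.1 r.1 r.2 p.2]
    by_cases e1 : p.1 = r.1 <;> by_cases e2 : p.2 = r.2 <;>
      simp [Matrix.one_apply, Prod.ext_iff, e1, e2, eq_comm]
  have hRtil : Rtil = RtilE k q := by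
    have hp : ptM Rtil = ptM (RtilE k q) := by
      calc ptM Rtil = ptM Rtil * (ptM (Rgl2 k q) * ptM (RtilE k q)) := by
            rw [ptR_mul_ptRtilE q hq0, mul_one]
        _ = (ptM Rtil * ptM (Rgl2 k q)) * ptM (RtilE k q) := by rw [mul_assoc]
        _ = ptM (RtilE k q) := by rw [ht1, one_mul]
    have := congrArg ptM hp
    rwa [ptM_ptM, ptM_ptM] at this
  rw [hRinv, hRtil] at hB
  have hBig : ptM (bigR (Rgl2 k q) (RinvE k q) (RtilE k q)) * ptM Btil = 1 := by
    ext p r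
    rw [ptM_mul_apply, hB.2 p.1 r.1 r.2 p.2]
    by_cases e1 : p.1 = r.1 <;> by_cases e2 : p.2 = r.2 <;>
      simp [Matrix.one_apply, Prod.ext_iff, e1, e2, eq_comm]
  have hWU : wV k q ᵥ* ptM (bigR (Rgl2 k q) (RinvE k q) (RtilE k q)) = uV k := by
    funext Q
    simpa [Matrix.vecMul, dotProduct, ptM] using key_w q hq0 Q
  have hdim : braidedDim Btil = uV k ⬝ᵥ ptM Btil *ᵥ uV k := by
    refine Eq.symm ?_
    have e1 : uV k ⬝ᵥ ptM Btil *ᵥ uV k = ∑ K : I2 2, (ptM Btil *ᵥ uV k) (K, K) :=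
      sum_uV_left _
    have e2 : ∀ K : I2 2, (ptM Btil *ᵥ uV k) (K, K) = ∑ J : I2 2, Btil (K, J) (J, K) := by
      intro K
      have h0 : (ptM Btil *ᵥ uV k) (K, K) = ∑ Q, ptM Btil (K, K) Q * uV k Q := rfl
      rw [h0, sum_uV_right]
      rfl
    rw [e1]
    simp_rw [e2]
    rw [braidedDim, Finset.sum_comm]
  have hchain : uV k ⬝ᵥ ptM Btil *ᵥ uV k = wV k q ⬝ᵥ uV k := by
    calc uV k ⬝ᵥ ptM Btil *ᵥ uV k
        = (wV k q ᵥ* ptM (bigR (Rgl2 k q) (RinvE k q) (RtilE k q))) ⬝ᵥ ptM Btil *ᵥ uV k := by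
          rw [hWU]
      _ = wV k q ⬝ᵥ (ptM (bigR (Rgl2 k q) (RinvE k q) (RtilE k q)) *ᵥ (ptM Btil *ᵥ uV k)) := by
          rw [← Matrix.dotProduct_mulVec]
      _ = wV k q ⬝ᵥ ((ptM (bigR (Rgl2 k q) (RinvE k q) (RtilE k q)) * ptM Btil) *ᵥ uV k) := by
          rw [Matrix.mulVec_mulVec]
      _ = wV k q ⬝ᵥ uV k := by rw [hBig, Matrix.one_mulVec]
  have hq2 : (q : k) ^ 2 ≠ 1 := by simpa using hgen 1 one_pos
  have hne : (1 : k) - q⁻¹ ^ 2 ≠ 0 := by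
    rw [sub_ne_zero]
    intro h
    apply hq2
    have hmul : q ^ 2 * q⁻¹ ^ 2 = 1 := by field_simp
    calc q ^ 2 = q ^ 2 * q⁻¹ ^ 2 := by rw [← h, mul_one]
      _ = 1 := hmul
  rw [hdim, hchain]
  have : wV k q ⬝ᵥ uV k = 1 + q⁻¹ ^ 2 + q⁻¹ ^ 4 + q⁻¹ ^ 6 := by
    simp [wV, uV, dotProduct, Fintype.sum_prod_type, Fin.sum_univ_two, Prod.ext_iff]
    ring
  rw [this, eq_div_iff hne]
  ring
end
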